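/- arXiv:1902.10055 — 4 statements merged into one kernel-verified Lean document; each statement's English description precedes it below -/
import Mathlib

section
/- Let TP ⊆ R_max^n be a nonempty compact tropical polyhedron. Then the set M(TP) of all minimal points of TP is a nonempty min-essential subset: for every x ∈ R_max^n, min_{z ∈ TP} x^T z is attained at some minimal point of TP. -/
open Finset

/-- Tropical (max-plus) scalar product over `R_max = ℝ ∪ {-∞}`,
modelled as `WithBot ℝ`: `x^T y = max_i (x_i + y_i)`. -/
noncomputable def tdot {n : ℕ} (x y : Fin n → WithBot ℝ) : WithBot ℝ :=
  Finset.univ.sup (fun i => x i + y i)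

noncomputable def eexp : WithBot ℝ → ℝ := fun a => a.recBotCoe 0 Real.exp

/-- Tropical matrix-vector product. -/
noncomputable def tapply {m n : ℕ} (A : Fin m → Fin n → WithBot ℝ)
    (x : Fin n → WithBot ℝ) : Fin m → WithBot ℝ :=
  fun i => Finset.univ.sup (fun j => A i j + x j)

lemma eexp_nonneg (a : WithBot ℝ) : 0 ≤ eexp a := by
  induction a using WithBot.recBotCoe with
  | bot => exact le_rfl
  | coe a => exact (Real.exp_pos a).le

lemma eexp_le_eexp_iff {a b : WithBot ℝ} : eexp a ≤ eexp b ↔ a ≤ b := by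
  induction a using WithBot.recBotCoe with
  | bot => simpa [show eexp ⊥ = 0 from rfl] using eexp_nonneg b
  | coe a =>
    induction b using WithBot.recBotCoe with
    | bot =>
      simp only [eexp, WithBot.recBotCoe_coe, WithBot.recBotCoe_bot]
      constructor
      · intro h; exact absurd h (not_le.2 (Real.exp_pos a))
      · intro h; exact absurd h (by simp)
    | coe b =>
      simp [eexp, Real.exp_le_exp, WithBot.coe_le_coe]

lemma eexp_injective : Function.Injective eexp := fun a b h =>
  le_antisymm (eexp_le_eexp_iff.1 h.le) (eexp_le_eexp_iff.1 h.ge)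

lemma eexp_add (a b : WithBot ℝ) : eexp (a + b) = eexp a * eexp b := by
  induction a using WithBot.recBotCoe with
  | bot => simp [eexp]
  | coe a =>
    induction b using WithBot.recBotCoe with
    | bot => simp [eexp]
    | coe b =>
      simp only [← WithBot.coe_add, eexp, WithBot.recBotCoe_coe, Real.exp_add]

lemma tdot_mono {n : ℕ} (x : Fin n → WithBot ℝ) {z z' : Fin n → WithBot ℝ}
    (h : z ≤ z') : tdot x z ≤ tdot x z' := by
  unfold tdot
  refine Finset.sup_le fun i _ => ?_
  exact le_trans (add_le_add le_rfl (h i))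
    (Finset.le_sup (f := fun i => x i + z' i) (Finset.mem_univ i))

/-- For a nonempty compact tropical polyhedron, the set of minimal points is a
nonempty min-essential subset: for every x, the minimum of x^T z over z ∈ TP
is attained at some minimal point. -/
theorem minimalPoints_minEssential {m n : ℕ}
    (A B : Fin m → Fin n → WithBot ℝ) (c d : Fin m → WithBot ℝ)
    (TP : Set (Fin n → WithBot ℝ))
    (hTP : TP = {x : Fin n → WithBot ℝ | ∀ i, tapply A x i ⊔ c i ≤ tapply B x i ⊔ d i})
    (hne : TP.Nonempty)
    (hcomp : IsCompact ((fun x (i : Fin n) => eexp (x i)) '' TP)) :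
    ∀ x : Fin n → WithBot ℝ, ∃ mpt ∈ TP,
      (∀ z ∈ TP, z ≤ mpt → z = mpt) ∧ ∀ z ∈ TP, tdot x mpt ≤ tdot x z := by
  intro x
  rcases Nat.eq_zero_or_pos n with hn | hn
  · -- trivial case: Fin 0 → _ is a subsingleton
    subst hn
    obtain ⟨z₀, hz₀⟩ := hne
    refine ⟨z₀, hz₀, fun z _ _ => funext fun i => i.elim0, fun z _ => ?_⟩
    have : z = z₀ := funext fun i => i.elim0
    rw [this]
  · have hnne : (Finset.univ : Finset (Fin n)).Nonempty := by
      simpa [Finset.univ_nonempty_iff] using Fin.pos_iff_nonempty.1 hn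
    set φ : (Fin n → WithBot ℝ) → (Fin n → ℝ) := fun z i => eexp (z i) with hφ
    set K : Set (Fin n → ℝ) := φ '' TP with hK
    have hKcomp : IsCompact K := hcomp
    -- the pushed-forward objective
    set F : (Fin n → ℝ) → ℝ := fun u => Finset.univ.sup' hnne fun i => eexp (x i) * u i
      with hF
    have hFt : ∀ z : Fin n → WithBot ℝ, F (φ z) = eexp (tdot x z) := by
      intro z
      obtain ⟨i₀, -, hi₀⟩ := Finset.exists_mem_eq_sup Finset.univ hnne
        (fun i => x i + z i)
      have htd : tdot x z = x i₀ + z i₀ := hi₀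
      refine le_antisymm ?_ ?_
      · refine Finset.sup'_le _ _ fun i _ => ?_
        rw [← eexp_add, htd]
        exact eexp_le_eexp_iff.2 (by rw [← htd]; exact Finset.le_sup (f := fun i => x i + z i) (Finset.mem_univ i))
      · rw [htd, eexp_add]
        exact Finset.le_sup' (fun i => eexp (x i) * eexp (z i)) (Finset.mem_univ i₀)
    have hFcont : Continuous F :=
      Continuous.finset_sup'_apply hnne fun i _ =>
        (continuous_const.mul (continuous_apply i))
    -- Step 1: minimize F over K
    have hKne : K.Nonempty := hne.image φ
    obtain ⟨u₀, hu₀K, hu₀min⟩ := hKcomp.exists_isMinOn hKne hFcont.continuousOn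
    obtain ⟨z₀, hz₀TP, hz₀⟩ := hu₀K
    -- Step 2: minimize the coordinate sum over K ∩ Iic u₀
    have hS : IsCompact (K ∩ Set.Iic u₀) := hKcomp.inter_right isClosed_Iic
    have hSne : (K ∩ Set.Iic u₀).Nonempty := ⟨u₀, ⟨z₀, hz₀TP, hz₀⟩, Set.mem_Iic.mpr le_rfl⟩
    have hGcont : Continuous fun u : Fin n → ℝ => ∑ i, u i :=
      continuous_finset_sum _ fun i _ => continuous_apply i
    obtain ⟨u₁, ⟨hu₁K, hu₁le⟩, hu₁min⟩ := hS.exists_isMinOn hSne hGcont.continuousOn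
    obtain ⟨z₁, hz₁TP, hz₁⟩ := hu₁K
    have hφle : ∀ {a b : Fin n → WithBot ℝ}, φ a ≤ φ b ↔ a ≤ b := by
      intro a b
      constructor
      · exact fun h i => eexp_le_eexp_iff.1 (h i)
      · exact fun h i => eexp_le_eexp_iff.2 (h i)
    have hz₁z₀ : z₁ ≤ z₀ := by
      refine hφle.1 ?_
      rw [hz₁, hz₀]; exact hu₁le
    refine ⟨z₁, hz₁TP, ?_, ?_⟩
    · -- minimality
      intro z hzTP hzle
      have hφz : φ z ≤ φ z₁ := hφle.2 hzle
      have hzS : φ z ∈ K ∩ Set.Iic u₀ :=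
        ⟨⟨z, hzTP, rfl⟩, by rw [← hz₁] at hu₁le; exact le_trans hφz hu₁le⟩
      have hsum : ∑ i, φ z₁ i ≤ ∑ i, φ z i := by
        have := hu₁min hzS
        simpa [hz₁] using this
      have hsum' : ∑ i, φ z i ≤ ∑ i, φ z₁ i :=
        Finset.sum_le_sum fun i _ => hφz i
      have heq : ∀ i ∈ Finset.univ, φ z i = φ z₁ i :=
        (Finset.sum_eq_sum_iff_of_le fun i _ => hφz i).1 (le_antisymm hsum' hsum)
      exact funext fun i => eexp_injective (heq i (Finset.mem_univ i))
    · -- min-essentiality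
      intro z hzTP
      have h1 : tdot x z₁ ≤ tdot x z₀ := tdot_mono x hz₁z₀
      have h2 : tdot x z₀ ≤ tdot x z := by
        have : F u₀ ≤ F (φ z) := hu₀min ⟨z, hzTP, rfl⟩
        rw [← hz₀, hFt, hFt] at this
        exact eexp_le_eexp_iff.1 this
      exact le_trans h1 h2
end

section
/- Let y^max ∈ R^n, let x* ∈ R^n be defined by x*_i = Σ_{k ≠ i} y^max_k, and let I, J partition {1,…,n}. Suppose x ∈ R_max^n satisfies x_i = x*_i for i ∈ I and x_j < x*_j for j ∈ J, and y ∈ R_max^n satisfies y ≤ y^max. Then x^T y = x^T y^max (tropical scalar products) holds if and only if max_{i ∈ I} ( (Σ_{k ≠ i} y^max_k) + y_i ) = Σ_{k=1}^n y^max_k. -/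
open Finset

/-- x*_i = Σ_{k ≠ i} y^max_k, as an element of R_max. -/
noncomputable def xstar {n : ℕ} (ymax : Fin n → ℝ) (i : Fin n) : WithBot ℝ :=
  ((∑ k ∈ Finset.univ.erase i, ymax k : ℝ) : WithBot ℝ)

/-- Lemma: for x agreeing with x* on I and strictly below on J, and y ≤ y^max,
the equation x^T y = x^T y^max is equivalent to
max_{i∈I} (x*_i + y_i) = Σ_k y^max_k. -/
theorem tdot_eq_iff_I_part {n : ℕ} (ymax : Fin n → ℝ) (I J : Finset (Fin n))
    (hIJ : I ∪ J = Finset.univ) (hdisj : Disjoint I J) (hI : I.Nonempty)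
    (x y : Fin n → WithBot ℝ)
    (hxI : ∀ i ∈ I, x i = xstar ymax i)
    (hxJ : ∀ j ∈ J, x j < xstar ymax j)
    (hy : ∀ i, y i ≤ (ymax i : WithBot ℝ)) :
    tdot x y = tdot x (fun i => (ymax i : WithBot ℝ)) ↔
      I.sup (fun i => xstar ymax i + y i) = ((∑ k, ymax k : ℝ) : WithBot ℝ) := by
  classical
  set S : ℝ := ∑ k, ymax k with hS
  have hxs : ∀ i : Fin n, xstar ymax i + (ymax i : WithBot ℝ) = (S : WithBot ℝ) := by
    intro i
    rw [xstar, ← WithBot.coe_add, WithBot.coe_inj]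
    exact Finset.sum_erase_add _ _ (mem_univ i)
  have hbotS : (⊥ : WithBot ℝ) < (S : WithBot ℝ) := WithBot.bot_lt_coe _
  have hJlt : ∀ j ∈ J, x j + y j < (S : WithBot ℝ) := by
    intro j hj
    calc x j + y j ≤ x j + (ymax j : WithBot ℝ) := add_le_add_right (hy j) _
      _ < xstar ymax j + (ymax j : WithBot ℝ) :=
        WithBot.add_lt_add_right WithBot.coe_ne_bot (hxJ j hj)
      _ = S := hxs j
  have hsplit : ∀ z : Fin n → WithBot ℝ, Finset.univ.sup z = I.sup z ⊔ J.sup z := by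
    intro z; rw [← hIJ, Finset.sup_union]
  have hIsup : I.sup (fun i => x i + y i) = I.sup (fun i => xstar ymax i + y i) :=
    Finset.sup_congr rfl (fun i hi => by rw [hxI i hi])
  have hJsup : J.sup (fun j => x j + y j) < (S : WithBot ℝ) := by
    rw [Finset.sup_lt_iff hbotS]; exact hJlt
  have htd_ymax : tdot x (fun i => (ymax i : WithBot ℝ)) = (S : WithBot ℝ) := by
    rw [tdot, hsplit]
    have h1 : I.sup (fun i => x i + (ymax i : WithBot ℝ)) = (S : WithBot ℝ) := by
      apply le_antisymm
      · exact Finset.sup_le (fun i hi => by rw [hxI i hi, hxs i])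
      · obtain ⟨i, hi⟩ := hI
        refine le_trans ?_ (Finset.le_sup hi)
        rw [hxI i hi, hxs i]
    have h2 : J.sup (fun j => x j + (ymax j : WithBot ℝ)) ≤ (S : WithBot ℝ) :=
      Finset.sup_le fun j hj => le_of_lt (by
        calc x j + (ymax j : WithBot ℝ) < xstar ymax j + (ymax j : WithBot ℝ) :=
            WithBot.add_lt_add_right WithBot.coe_ne_bot (hxJ j hj)
          _ = S := hxs j)
    rw [h1]; exact sup_eq_left.mpr h2
  rw [htd_ymax, tdot, hsplit, hIsup]
  constructor
  · intro h
    have hIle : I.sup (fun i => xstar ymax i + y i) ≤ (S : WithBot ℝ) :=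
      Finset.sup_le fun i hi => le_trans (add_le_add_right (hy i) _) (le_of_eq (hxs i))
    refine le_antisymm hIle ?_
    rcases le_sup_iff.mp (le_of_eq h.symm) with h' | h'
    · exact h'
    · exact absurd h' (not_le.mpr hJsup)
  · intro h
    rw [h]
    exact sup_eq_left.mpr (le_of_lt hJsup)
end

section
/- With y^max ∈ R^n the greatest point of TP₂ and x* defined by x*_i = Σ_{k≠i} y^max_k, the feasible set {(x,y) ∈ TP₁ × TP₂ : x^T y = x^T y^max} equals the union over all partitions (I, J) of {1,…,n} with I nonempty of the sets TP₁^{IJ} × TP₂^{IJ}, where TP₁^{IJ} = {x ∈ TP₁ : x_j − x*_j < x_i − x*_i for all i ∈ I, j ∈ J, and x_k − x*_k = x_l − x*_l for all k, l ∈ I} and TP₂^{IJ} = {y ∈ TP₂ : max_{i∈I} ((Σ_{k≠i} y^max_k) + y_i) = Σ_k y^max_k}. -/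
open Finset

lemma shift_lt (a b : WithBot ℝ) (p q r s : ℝ) (h : p + s = q + r) :
    a + (p : WithBot ℝ) < b + (q : WithBot ℝ) ↔
      a + (r : WithBot ℝ) < b + (s : WithBot ℝ) := by
  rw [← WithBot.add_lt_add_iff_right (z := ((r - p : ℝ) : WithBot ℝ)) (by simp)]
  have h1 : a + (p : WithBot ℝ) + ((r - p : ℝ) : WithBot ℝ) = a + (r : WithBot ℝ) := by
    rw [add_assoc, ← WithBot.coe_add]; norm_num
  have h2 : b + (q : WithBot ℝ) + ((r - p : ℝ) : WithBot ℝ) = b + (s : WithBot ℝ) := by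
    rw [add_assoc, ← WithBot.coe_add]
    have : q + (r - p) = s := by linarith
    rw [this]
  rw [h1, h2]

lemma shift_eq (a b : WithBot ℝ) (p q r s : ℝ) (h : p + s = q + r) :
    a + (p : WithBot ℝ) = b + (q : WithBot ℝ) ↔
      a + (r : WithBot ℝ) = b + (s : WithBot ℝ) := by
  rw [← WithBot.add_right_inj (z := ((r - p : ℝ) : WithBot ℝ)) (by simp)]
  have h1 : a + (p : WithBot ℝ) + ((r - p : ℝ) : WithBot ℝ) = a + (r : WithBot ℝ) := by
    rw [add_assoc, ← WithBot.coe_add]; norm_num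
  have h2 : b + (q : WithBot ℝ) + ((r - p : ℝ) : WithBot ℝ) = b + (s : WithBot ℝ) := by
    rw [add_assoc, ← WithBot.coe_add]
    have : q + (r - p) = s := by linarith
    rw [this]
  rw [h1, h2]

/-- Decomposition of the feasible set of the max-type lower level problem into
cells indexed by the partitions (I, J = Iᶜ) of {1,…,n} with I nonempty. -/
theorem feasible_set_decomposition {n : ℕ} (TP1 TP2 : Set (Fin n → WithBot ℝ))
    (ymax : Fin n → ℝ)
    (hmem : (fun i => (ymax i : WithBot ℝ)) ∈ TP2)
    (hgreat : ∀ y ∈ TP2, y ≤ fun i => (ymax i : WithBot ℝ))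
    (hfin : ∀ x ∈ TP1, ∃ i, x i ≠ ⊥) :
    {p : (Fin n → WithBot ℝ) × (Fin n → WithBot ℝ) |
        p.1 ∈ TP1 ∧ p.2 ∈ TP2 ∧
        tdot p.1 p.2 = tdot p.1 (fun i => (ymax i : WithBot ℝ))} =
      ⋃ (I : Finset (Fin n)) (_ : I.Nonempty),
        ({x ∈ TP1 |
            (∀ i ∈ I, ∀ j ∉ I, x j + xstar ymax i < x i + xstar ymax j) ∧
            (∀ k ∈ I, ∀ l ∈ I, x k + xstar ymax l = x l + xstar ymax k)} ×ˢ
         {y ∈ TP2 |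
            I.sup (fun i => xstar ymax i + y i) = ((∑ k, ymax k : ℝ) : WithBot ℝ)}) := by
  classical
  set S : ℝ := ∑ k, ymax k with hS
  have hp : ∀ i : Fin n, (∑ k ∈ Finset.univ.erase i, ymax k) + ymax i = S := by
    intro i
    exact Finset.sum_erase_add _ _ (Finset.mem_univ i)
  ext ⟨x, y⟩
  simp only [Set.mem_setOf_eq, Set.mem_iUnion, Set.mem_prod]
  constructor
  · rintro ⟨hx1, hy2, heq⟩
    obtain ⟨i0, hi0⟩ := hfin x hx1
    set h : Fin n → WithBot ℝ := fun i => x i + (ymax i : WithBot ℝ) with hh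
    set M : WithBot ℝ := Finset.univ.sup h with hM
    have hMne : M ≠ ⊥ := by
      have hle : h i0 ≤ M := Finset.le_sup (Finset.mem_univ i0)
      intro hbot
      rw [hbot, le_bot_iff, hh] at hle
      simp only [WithBot.add_eq_bot] at hle
      rcases hle with h1 | h2
      · exact hi0 h1
      · exact WithBot.coe_ne_bot h2
    set I : Finset (Fin n) := Finset.univ.filter (fun i => h i = M) with hI
    have hmemI : ∀ i, i ∈ I ↔ h i = M := by
      intro i; simp [hI]
    have hIne : I.Nonempty := by
      obtain ⟨j, _, hj⟩ := Finset.exists_mem_eq_sup Finset.univ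
        ⟨i0, Finset.mem_univ i0⟩ h
      exact ⟨j, (hmemI j).2 hj.symm⟩
    refine ⟨I, hIne, ⟨hx1, ?_, ?_⟩, hy2, ?_⟩
    · intro i hi j hj
      rw [hmemI] at hi hj
      have hlt : h j < h i := by
        rw [hi]
        exact lt_of_le_of_ne (Finset.le_sup (Finset.mem_univ j)) hj
      unfold xstar
      rw [shift_lt (x j) (x i) _ _ (ymax j) (ymax i)
        (by rw [hp i]; exact (hp j).symm)]
      exact hlt
    · intro k hk l hl
      rw [hmemI] at hk hl
      unfold xstar
      rw [shift_eq (x k) (x l) _ _ (ymax k) (ymax l)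
        (by rw [hp l]; exact (hp k).symm)]
      exact hk.trans hl.symm
    · -- the y condition
      apply le_antisymm
      · apply Finset.sup_le
        intro i hi
        have hyle : y i ≤ (ymax i : WithBot ℝ) := hgreat y hy2 i
        calc xstar ymax i + y i ≤ xstar ymax i + (ymax i : WithBot ℝ) :=
              add_le_add_right hyle _
          _ = ((S : ℝ) : WithBot ℝ) := by
              unfold xstar; rw [← WithBot.coe_add, hp i]
      · -- find the index where tdot x y attains its sup
        obtain ⟨i1, _, hi1⟩ := Finset.exists_mem_eq_sup Finset.univ
          ⟨i0, Finset.mem_univ i0⟩ (fun i => x i + y i)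
        have htxy : tdot x y = x i1 + y i1 := hi1
        have hMxy : x i1 + y i1 = M := by rw [← htxy, heq]; rfl
        have hle1 : x i1 + y i1 ≤ h i1 :=
          add_le_add_right (hgreat y hy2 i1) _
        have hle2 : h i1 ≤ M := Finset.le_sup (Finset.mem_univ i1)
        have hi1M : h i1 = M := le_antisymm hle2 (hMxy ▸ hle1)
        have hx1ne : x i1 ≠ ⊥ := by
          intro hbot
          apply hMne
          rw [← hi1M, hh]
          simp [hbot]
        have hyeq : y i1 = (ymax i1 : WithBot ℝ) :=
          WithBot.add_left_cancel hx1ne (by rw [hMxy]; exact hi1M.symm)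
        have : xstar ymax i1 + y i1 = ((S : ℝ) : WithBot ℝ) := by
          rw [hyeq]; unfold xstar; rw [← WithBot.coe_add, hp i1]
        calc ((S : ℝ) : WithBot ℝ) = xstar ymax i1 + y i1 := this.symm
          _ ≤ I.sup (fun i => xstar ymax i + y i) :=
              Finset.le_sup (f := fun i => xstar ymax i + y i) ((hmemI i1).2 hi1M)
  · rintro ⟨I, hIne, ⟨hx1, hlt, heqI⟩, hy2, hysup⟩
    obtain ⟨i0, hi0⟩ := hIne
    set h : Fin n → WithBot ℝ := fun i => x i + (ymax i : WithBot ℝ) with hh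
    have heqI' : ∀ k ∈ I, h k = h i0 := by
      intro k hk
      have := heqI k hk i0 hi0
      unfold xstar at this
      rwa [shift_eq (x k) (x i0) _ _ (ymax k) (ymax i0)
        (by rw [hp i0]; exact (hp k).symm)] at this
    have hsup_ymax : tdot x (fun i => (ymax i : WithBot ℝ)) = h i0 := by
      apply le_antisymm
      · apply Finset.sup_le
        intro j _
        by_cases hj : j ∈ I
        · exact le_of_eq (heqI' j hj)
        · have := hlt i0 hi0 j hj
          unfold xstar at this
          rw [shift_lt (x j) (x i0) _ _ (ymax j) (ymax i0)
            (by rw [hp i0]; exact (hp j).symm)] at this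
          exact le_of_lt this
      · exact Finset.le_sup (Finset.mem_univ i0)
    obtain ⟨i1, hi1I, hi1⟩ := Finset.exists_mem_eq_sup I ⟨i0, hi0⟩
      (fun i => xstar ymax i + y i)
    have hi1S : xstar ymax i1 + y i1 = ((S : ℝ) : WithBot ℝ) := by
      rw [← hi1, hysup]
    have hyeq : y i1 = (ymax i1 : WithBot ℝ) := by
      apply WithBot.add_left_cancel (x := xstar ymax i1) (by
        unfold xstar; exact WithBot.coe_ne_bot)
      rw [hi1S]
      unfold xstar
      rw [← WithBot.coe_add, hp i1]
    refine ⟨hx1, hy2, le_antisymm ?_ ?_⟩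
    · apply Finset.sup_le
      intro j _
      calc x j + y j ≤ x j + (ymax j : WithBot ℝ) :=
            add_le_add_right (hgreat y hy2 j) _
        _ ≤ tdot x (fun i => (ymax i : WithBot ℝ)) :=
            Finset.le_sup (f := fun i => x i + ((ymax i : ℝ) : WithBot ℝ)) (Finset.mem_univ j)
    · rw [hsup_ymax, ← heqI' i1 hi1I]
      calc h i1 = x i1 + y i1 := by rw [hh]; simp [hyeq]
        _ ≤ tdot x y := Finset.le_sup (f := fun i => x i + y i) (Finset.mem_univ i1)
end

section
/- Let f(x,y) be isotone in its second argument. Then the minimum of f over {(x,y) : x ∈ TP₁, y ∈ TP₂, x^T y ≤ min_{y'∈TP₂} x^T y'} equals the minimum of f over {(x,y) : x ∈ TP₁, y ∈ M(TP₂), x^T y ≤ min_{z ∈ M(TP₂)} x^T z}, where M(TP₂) is the set of minimal points of TP₂, assuming both minima exist and M(TP₂) is a min-essential subset of TP₂ with the property that every y ∈ TP₂ dominates some minimal point. -/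
open Finset

/-- The set of minimal points of a set in R_max^n. -/
def minimalPoints {n : ℕ} (TP : Set (Fin n → WithBot ℝ)) : Set (Fin n → WithBot ℝ) :=
  {m | m ∈ TP ∧ ∀ z ∈ TP, z ≤ m → z = m}

/-- For f isotone in the second argument, the minimum over the lower-level-optimal
pairs equals the minimum over the analogous problem restricted to M(TP₂). -/
theorem minmin_restrict_to_minimal {n : ℕ} (TP1 TP2 : Set (Fin n → WithBot ℝ))
    (f : (Fin n → WithBot ℝ) → (Fin n → WithBot ℝ) → ℝ)
    (hiso : ∀ x y1 y2 : Fin n → WithBot ℝ, y1 ≤ y2 → f x y1 ≤ f x y2)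
    (hdom : ∀ y ∈ TP2, ∃ m ∈ minimalPoints TP2, m ≤ y)
    (m1 m2 : ℝ)
    (h1 : IsLeast {v : ℝ | ∃ x ∈ TP1, ∃ y ∈ TP2,
        (∀ y' ∈ TP2, tdot x y ≤ tdot x y') ∧ v = f x y} m1)
    (h2 : IsLeast {v : ℝ | ∃ x ∈ TP1, ∃ y ∈ minimalPoints TP2,
        (∀ z ∈ minimalPoints TP2, tdot x y ≤ tdot x z) ∧ v = f x y} m2) :
    m1 = m2 := by
  have tmono : ∀ x y1 y2 : Fin n → WithBot ℝ, y1 ≤ y2 → tdot x y1 ≤ tdot x y2 := by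
    intro x y1 y2 h
    exact Finset.sup_mono_fun (fun i _ => add_le_add_right (h i) _)
  obtain ⟨⟨x1, hx1, y1, hy1, hopt1, hv1⟩, hlb1⟩ := h1
  obtain ⟨⟨x2, hx2, y2, hy2, hopt2, hv2⟩, hlb2⟩ := h2
  apply le_antisymm
  · -- m1 ≤ m2: (x2, y2) is feasible for problem 1
    apply hlb1
    refine ⟨x2, hx2, y2, hy2.1, ?_, hv2⟩
    intro y' hy'
    obtain ⟨m, hm, hmy⟩ := hdom y' hy'
    exact le_trans (hopt2 m hm) (tmono x2 m y' hmy)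
  · -- m2 ≤ m1: take m ≤ y1 minimal; (x1, m) feasible for problem 2
    obtain ⟨m, hm, hmy⟩ := hdom y1 hy1
    have hfeas : f x1 m ∈ {v : ℝ | ∃ x ∈ TP1, ∃ y ∈ minimalPoints TP2,
        (∀ z ∈ minimalPoints TP2, tdot x y ≤ tdot x z) ∧ v = f x y} := by
      refine ⟨x1, hx1, m, hm, ?_, rfl⟩
      intro z hz
      exact le_trans (tmono x1 m y1 hmy) (hopt1 z hz.1)
    calc m2 ≤ f x1 m := hlb2 hfeas
      _ ≤ f x1 y1 := hiso x1 m y1 hmy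
      _ = m1 := hv1.symm
end
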